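/- Assuming CH, the poset P for adding a Kurepa tree with ℵ_{ω₁} branches (conditions (t,f) with t a countable tree of successor countable height with countable levels and f a countable partial function from ℵ_{ω₁} onto the top level of t) satisfies the ℵ₂-chain condition. -/

import Mathlib

open Cardinal

open Set

universe u

lemma pow_aleph0_CH (hCH : (2 : Cardinal.{1}) ^ (ℵ₀ : Cardinal.{1}) = aleph 1) :
    (aleph 1 : Cardinal.{1}) ^ (ℵ₀ : Cardinal.{1}) = aleph 1 := by
  rw [← hCH, ← power_mul, aleph0_mul_aleph0]

lemma exists_enum {X : Type u} {S : Set X} (hS : S.Countable) :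
    ∃ g : ℕ → Option X, S = {x | ∃ n, g n = some x} := by
  rcases S.eq_empty_or_nonempty with h | h
  · exact ⟨fun _ => none, by simp [h]⟩
  · obtain ⟨f, rfl⟩ := hS.exists_eq_range h
    refine ⟨fun n => some (f n), ?_⟩
    ext x
    simp [Set.mem_range, eq_comm]

lemma mk_countable_le {X : Type 1} (hCH : (2 : Cardinal.{1}) ^ (ℵ₀ : Cardinal.{1}) = aleph 1)
    (hX : #X ≤ aleph 1) : #{S : Set X // S.Countable} ≤ aleph 1 := by
  have h1 : #{S : Set X // S.Countable} ≤ #(ℕ → Option X) := by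
    choose g hg using fun S : {S : Set X // S.Countable} => exists_enum S.2
    refine mk_le_of_injective (f := g) ?_
    intro S T h
    ext1
    rw [hg S, hg T, h]
  refine h1.trans ?_
  rw [mk_arrow]
  have h2 : Cardinal.lift.{0} #(Option X) ≤ aleph 1 := by
    rw [Cardinal.lift_id', mk_option]
    calc #X + 1 ≤ aleph 1 + aleph 1 := by
          exact add_le_add hX (one_le_aleph0.trans (aleph0_le_aleph 1))
      _ = aleph 1 := add_eq_self (aleph0_le_aleph 1)
  rw [mk_nat, lift_aleph0]
  calc Cardinal.lift.{0} #(Option X) ^ (ℵ₀ : Cardinal.{1})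
      ≤ (aleph 1) ^ (ℵ₀ : Cardinal.{1}) := power_le_power_right h2
    _ = aleph 1 := pow_aleph0_CH hCH

/-- A condition in the standard poset for adding a Kurepa tree with `ℵ_{ω₁}` branches:
a pair `(t, f)` where `t` is a tree of height `β + 1` (for some `β < ω₁`) with countable
levels, whose nodes at level `γ` are pairs `(γ, n)` with `n : ℕ`, and `f` is a countable
partial function from `ℵ_{ω₁}` onto the top level `t_β`. -/
structure KCond : Type 1 where
  β : Ordinal.{0}
  β_lt : β < (aleph 1).ord
  t : Set (Ordinal.{0} × ℕ)
  t_le : ∀ p ∈ t, p.1 ≤ β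
  level_nonempty : ∀ γ : Ordinal.{0}, γ ≤ β → ∃ n : ℕ, (γ, n) ∈ t
  tlt : (Ordinal.{0} × ℕ) → (Ordinal.{0} × ℕ) → Prop
  tlt_mem : ∀ p q, tlt p q → p ∈ t ∧ q ∈ t ∧ p.1 < q.1
  tlt_trans : ∀ p q r, tlt p q → tlt q r → tlt p r
  tlt_total : ∀ p q r, tlt p r → tlt q r → p.1 < q.1 → tlt p q
  tlt_below : ∀ q ∈ t, ∀ γ : Ordinal.{0}, γ < q.1 → ∃ n : ℕ, tlt (γ, n) q
  limit_unique : ∀ γ : Ordinal.{0}, γ ≠ 0 → (∀ δ : Ordinal.{0}, γ ≠ δ + 1) →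
    ∀ m n : ℕ, (γ, m) ∈ t → (γ, n) ∈ t →
      (∀ p, tlt p (γ, m) ↔ tlt p (γ, n)) → m = n
  dom : Set Ordinal.{0}
  dom_sub : ∀ δ ∈ dom, δ < (aleph ((aleph 1).ord)).ord
  dom_countable : dom.Countable
  fmap : Ordinal.{0} → ℕ
  fmap_mem : ∀ δ ∈ dom, (β, fmap δ) ∈ t
  fmap_surj : ∀ n : ℕ, (β, n) ∈ t → ∃ δ ∈ dom, fmap δ = n

/-- The extension order on conditions: `q ≤ p` iff the tree of `p` is an initial segment of
the tree of `q` (with the same tree order), `dom f^p ⊆ dom f^q`, and for `δ ∈ dom f^p` the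
node `f^q(δ)` extends (or equals) `f^p(δ)` in the tree order of `q`. -/
def KCond.le (q p : KCond) : Prop :=
  p.β ≤ q.β ∧
  p.t = {x ∈ q.t | x.1 ≤ p.β} ∧
  (∀ x y : Ordinal.{0} × ℕ, x.1 ≤ p.β → y.1 ≤ p.β → (p.tlt x y ↔ q.tlt x y)) ∧
  p.dom ⊆ q.dom ∧
  ∀ δ ∈ p.dom,
    (p.β, p.fmap δ) = (q.β, q.fmap δ) ∨ q.tlt (p.β, p.fmap δ) (q.β, q.fmap δ)

open Classical in
/-- Two conditions with the same tree part whose `f`-parts agree on the common domain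
are compatible. -/
lemma KCond.compat (p q : KCond) (hβ : p.β = q.β) (ht : p.t = q.t) (hlt : p.tlt = q.tlt)
    (hf : ∀ δ, δ ∈ p.dom → δ ∈ q.dom → p.fmap δ = q.fmap δ) :
    ∃ r : KCond, r.le p ∧ r.le q := by
  refine ⟨{ β := p.β, β_lt := p.β_lt, t := p.t, t_le := p.t_le,
            level_nonempty := p.level_nonempty, tlt := p.tlt, tlt_mem := p.tlt_mem,
            tlt_trans := p.tlt_trans, tlt_total := p.tlt_total, tlt_below := p.tlt_below,
            limit_unique := p.limit_unique,
            dom := p.dom ∪ q.dom,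
            dom_sub := ?_, dom_countable := p.dom_countable.union q.dom_countable,
            fmap := fun δ => if δ ∈ p.dom then p.fmap δ else q.fmap δ,
            fmap_mem := ?_, fmap_surj := ?_ }, ?_, ?_⟩
  · rintro δ (h | h)
    exacts [p.dom_sub δ h, q.dom_sub δ h]
  · rintro δ (h | h)
    · simp only [if_pos h]; exact p.fmap_mem δ h
    · by_cases h' : δ ∈ p.dom
      · simp only [if_pos h']; exact p.fmap_mem δ h'
      · simp only [if_neg h', hβ, ht]; exact q.fmap_mem δ h
  · intro n hn
    obtain ⟨δ, hδ, hδ'⟩ := p.fmap_surj n hn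
    exact ⟨δ, Or.inl hδ, by simp only [if_pos hδ, hδ']⟩
  · refine ⟨le_rfl, ?_, fun x y _ _ => Iff.rfl, Set.subset_union_left, ?_⟩
    · ext x
      exact ⟨fun hx => ⟨hx, p.t_le x hx⟩, fun hx => hx.1⟩
    · intro δ hδ
      left
      simp only [if_pos hδ]
  · refine ⟨hβ.ge, ?_, ?_, Set.subset_union_right, ?_⟩
    · ext x
      simp only [Set.mem_sep_iff]
      constructor
      · intro hx
        have hx' : x ∈ p.t := by rw [ht]; exact hx
        exact ⟨hx', (p.t_le x hx').trans hβ.le⟩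
      · intro hx
        have hx' : x ∈ p.t := hx.1
        rwa [ht] at hx'
    · intro x y _ _
      rw [hlt]
    · intro δ hδ
      left
      by_cases h' : δ ∈ p.dom
      · simp only [if_pos h', hβ, hf δ h' hδ]
      · simp only [if_neg h', hβ]

lemma countable_Iic_of_lt_omega1 {β : Ordinal.{0}} (hβ : β < (aleph 1).ord) :
    (Set.Iic β).Countable := by
  rw [← Set.countable_coe_iff, ← Cardinal.mk_le_aleph0_iff]
  have h1 : Set.Iic β = Set.Iio (Order.succ β) := (Order.Iio_succ β).symm
  rw [h1, Ordinal.mk_Iio_ordinal, Ordinal.card_succ]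
  have h2 : β.card < aleph 1 := Cardinal.lt_ord.mp hβ
  have h3 : β.card ≤ ℵ₀ := by
    rwa [← Cardinal.succ_aleph0, Order.lt_succ_iff] at h2
  have h4 : β.card + 1 ≤ ℵ₀ := by
    calc β.card + 1 ≤ ℵ₀ + ℵ₀ := add_le_add h3 (one_le_aleph0)
      _ = ℵ₀ := Cardinal.add_eq_self le_rfl
  calc Cardinal.lift.{1} (β.card + 1) ≤ Cardinal.lift.{1} ℵ₀ := Cardinal.lift_le.mpr h4
    _ = ℵ₀ := Cardinal.lift_aleph0

lemma KCond.t_countable (p : KCond) : p.t.Countable := by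
  have h : p.t ⊆ (Set.Iic p.β) ×ˢ (Set.univ : Set ℕ) := by
    intro x hx
    exact ⟨p.t_le x hx, trivial⟩
  exact Set.Countable.mono h
    ((countable_Iic_of_lt_omega1 p.β_lt).prod Set.countable_univ)

/-- The countable set of "levels" below `ω₁`. -/
abbrev KNode : Type 1 := ↥(Set.Iio (aleph 1).ord) × ℕ

def nodeCode (x : KNode) : Ordinal.{0} × ℕ := (x.1.val, x.2)

lemma nodeCode_injective : Function.Injective nodeCode := by
  rintro ⟨⟨a, ha⟩, m⟩ ⟨⟨b, hb⟩, n⟩ h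
  simp only [nodeCode, Prod.mk.injEq] at h
  simp [h.1, h.2]

/-- The "key" of a condition: its tree and tree-order, coded as countable subsets. -/
noncomputable def KCond.key (p : KCond) :
    {S : Set KNode // S.Countable} × {S : Set (KNode × KNode) // S.Countable} :=
  ⟨⟨nodeCode ⁻¹' p.t, p.t_countable.preimage nodeCode_injective⟩,
   ⟨{z | p.tlt (nodeCode z.1) (nodeCode z.2)}, by
      refine Set.Countable.mono ?_
        ((p.t_countable.preimage nodeCode_injective).prod
          (p.t_countable.preimage nodeCode_injective))
      intro z hz
      obtain ⟨h1, h2, -⟩ := p.tlt_mem _ _ hz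
      exact ⟨h1, h2⟩⟩⟩

lemma KCond.mem_t_lt (p : KCond) {x : Ordinal.{0} × ℕ} (hx : x ∈ p.t) :
    x.1 < (aleph 1).ord := lt_of_le_of_lt (p.t_le x hx) p.β_lt

lemma KCond.key_inj {p q : KCond} (h : p.key = q.key) :
    p.β = q.β ∧ p.t = q.t ∧ p.tlt = q.tlt := by
  have h1 : nodeCode ⁻¹' p.t = nodeCode ⁻¹' q.t := congrArg (·.1.val) h
  have h2 : {z : KNode × KNode | p.tlt (nodeCode z.1) (nodeCode z.2)}
      = {z | q.tlt (nodeCode z.1) (nodeCode z.2)} := congrArg (·.2.val) h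
  have ht : p.t = q.t := by
    ext x
    constructor
    · intro hx
      have : (⟨⟨x.1, p.mem_t_lt hx⟩, x.2⟩ : KNode) ∈ nodeCode ⁻¹' p.t := by
        simpa [nodeCode] using hx
      rw [h1] at this
      simpa [nodeCode] using this
    · intro hx
      have : (⟨⟨x.1, q.mem_t_lt hx⟩, x.2⟩ : KNode) ∈ nodeCode ⁻¹' q.t := by
        simpa [nodeCode] using hx
      rw [← h1] at this
      simpa [nodeCode] using this
  have hβ : p.β = q.β := by
    obtain ⟨m, hm⟩ := p.level_nonempty p.β le_rfl
    obtain ⟨n, hn⟩ := q.level_nonempty q.β le_rfl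
    have e1 : p.β ≤ q.β := q.t_le (p.β, m) (ht ▸ hm)
    have e2 : q.β ≤ p.β := p.t_le (q.β, n) (ht.symm ▸ hn)
    exact le_antisymm e1 e2
  refine ⟨hβ, ht, ?_⟩
  funext x y
  apply propext
  constructor
  · intro hxy
    obtain ⟨hx, hy, -⟩ := p.tlt_mem _ _ hxy
    have : (⟨⟨⟨x.1, p.mem_t_lt hx⟩, x.2⟩, ⟨⟨y.1, p.mem_t_lt hy⟩, y.2⟩⟩ : KNode × KNode)
        ∈ {z : KNode × KNode | p.tlt (nodeCode z.1) (nodeCode z.2)} := by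
      simpa [nodeCode] using hxy
    rw [h2] at this
    simpa [nodeCode] using this
  · intro hxy
    obtain ⟨hx, hy, -⟩ := q.tlt_mem _ _ hxy
    have : (⟨⟨⟨x.1, q.mem_t_lt hx⟩, x.2⟩, ⟨⟨y.1, q.mem_t_lt hy⟩, y.2⟩⟩ : KNode × KNode)
        ∈ {z : KNode × KNode | q.tlt (nodeCode z.1) (nodeCode z.2)} := by
      simpa [nodeCode] using hxy
    rw [← h2] at this
    simpa [nodeCode] using this

lemma mul_le_aleph1 {a b : Cardinal.{1}} (ha : a ≤ aleph 1) (hb : b ≤ aleph 1) :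
    a * b ≤ aleph 1 := by
  calc a * b ≤ aleph 1 * aleph 1 := mul_le_mul' ha hb
    _ = aleph 1 := mul_eq_self (aleph0_le_aleph 1)

lemma mk_Iio_omega1 : #(↥(Set.Iio (aleph 1).ord)) = (aleph 1 : Cardinal.{1}) := by
  rw [Ordinal.mk_Iio_ordinal, Cardinal.card_ord, Cardinal.lift_aleph, Ordinal.lift_one]

lemma mk_KNode : #KNode = (aleph 1 : Cardinal.{1}) := by
  rw [Cardinal.mk_prod, mk_Iio_omega1, Cardinal.mk_nat, Cardinal.lift_uzero,
    Cardinal.lift_aleph0, Cardinal.aleph_mul_aleph0]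

lemma mk_keySpace_le (hCH : (2 : Cardinal.{1}) ^ (ℵ₀ : Cardinal.{1}) = aleph 1) :
    #({S : Set KNode // S.Countable} × {S : Set (KNode × KNode) // S.Countable})
      ≤ aleph 1 := by
  rw [Cardinal.mk_prod, Cardinal.lift_id, Cardinal.lift_id]
  refine mul_le_aleph1 (mk_countable_le hCH mk_KNode.le) (mk_countable_le hCH ?_)
  rw [Cardinal.mk_prod, Cardinal.lift_id, mk_KNode]
  exact mul_le_aleph1 le_rfl le_rfl

lemma mk_le_of_fiber_le {α β : Type 1} (f : α → β) (hβ : #β ≤ aleph 1)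
    (hf : ∀ b : β, #{a : α // f a = b} ≤ aleph 1) : #α ≤ (aleph 1 : Cardinal.{1}) := by
  calc #α = #(Σ b : β, {a : α // f a = b}) := Cardinal.mk_congr (Equiv.sigmaFiberEquiv f).symm
    _ = Cardinal.sum (fun b : β => #{a : α // f a = b}) := Cardinal.mk_sigma _
    _ ≤ Cardinal.sum (fun _ : β => (aleph 1 : Cardinal.{1})) := Cardinal.sum_le_sum _ _ hf
    _ = #β * aleph 1 := Cardinal.sum_const' _ _
    _ ≤ aleph 1 := mul_le_aleph1 hβ le_rfl

/-! ### The combinatorial core -/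

def KDom (B : Set KCond) : Set Ordinal.{0} := ⋃ q ∈ B, q.dom

lemma mem_KDom {B : Set KCond} {q : KCond} (hq : q ∈ B) {δ : Ordinal.{0}}
    (hδ : δ ∈ q.dom) : δ ∈ KDom B := by
  simp only [KDom, Set.mem_iUnion]
  exact ⟨q, hq, hδ⟩

lemma KDom_mono {B B' : Set KCond} (h : B ⊆ B') : KDom B ⊆ KDom B' := by
  intro δ hδ
  simp only [KDom, Set.mem_iUnion] at hδ ⊢
  obtain ⟨q, hq, hδ⟩ := hδ
  exact ⟨q, h hq, hδ⟩

lemma mk_KDom_le {B : Set KCond} (hB : #B ≤ aleph 1) : #(KDom B) ≤ (aleph 1 : Cardinal.{1}) := by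
  refine (Cardinal.mk_biUnion_le _ _).trans (mul_le_aleph1 hB (ciSup_le' fun q => ?_))
  have : Countable ↥(q.val.dom) := (q.val.dom_countable).to_subtype
  exact (Cardinal.mk_le_aleph0_iff.mpr this).trans (aleph0_le_aleph 1)

/-- The trace of the `f`-part of a condition on a set `D` of ordinals. -/
def trc (D : Set Ordinal.{0}) (p : KCond) : Set (Ordinal.{0} × ℕ) :=
  {x | x.1 ∈ p.dom ∧ x.1 ∈ D ∧ p.fmap x.1 = x.2}

lemma trc_countable (D : Set Ordinal.{0}) (p : KCond) : (trc D p).Countable := by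
  have h : trc D p ⊆ (fun δ => (δ, p.fmap δ)) '' p.dom := by
    rintro ⟨a, b⟩ hx
    exact ⟨a, hx.1, by simp [hx.2.2]⟩
  exact Set.Countable.mono h (p.dom_countable.image _)

lemma mk_trc_image_le (hCH : (2 : Cardinal.{1}) ^ (ℵ₀ : Cardinal.{1}) = aleph 1)
    {D : Set Ordinal.{0}} (hD : #D ≤ aleph 1) (C : Set KCond) :
    #(trc D '' C) ≤ (aleph 1 : Cardinal.{1}) := by
  classical
  set e : ↥D × ℕ → Ordinal.{0} × ℕ := fun y => (y.1.val, y.2) with he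
  have einj : Function.Injective e := by
    rintro ⟨⟨a, ha⟩, m⟩ ⟨⟨b, hb⟩, n⟩ h
    simp only [e, Prod.mk.injEq] at h
    simp [h.1, h.2]
  have hcnt : ∀ s ∈ trc D '' C, s.Countable := by
    rintro s ⟨p, _, rfl⟩
    exact trc_countable D p
  have hkey : ∀ s ∈ trc D '' C, e '' (e ⁻¹' s) = s := by
    rintro s ⟨p, hp, rfl⟩
    apply Set.image_preimage_eq_of_subset
    rintro ⟨a, b⟩ hx
    exact ⟨⟨⟨a, hx.2.1⟩, b⟩, rfl⟩
  have h1 : #(trc D '' C) ≤ #{S : Set (↥D × ℕ) // S.Countable} := by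
    refine Cardinal.mk_le_of_injective
      (f := fun s : ↥(trc D '' C) => (⟨e ⁻¹' s.val, (hcnt s.val s.2).preimage einj⟩ :
        {S : Set (↥D × ℕ) // S.Countable})) ?_
    intro s t h
    have h' : e ⁻¹' s.val = e ⁻¹' t.val := congrArg Subtype.val h
    ext1
    rw [← hkey s.val s.2, ← hkey t.val t.2, h']
  refine h1.trans (mk_countable_le hCH ?_)
  rw [Cardinal.mk_prod, Cardinal.lift_uzero, Cardinal.mk_nat, Cardinal.lift_aleph0]
  exact mul_le_aleph1 hD ((aleph0_le_aleph 1))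

/-- A set of chosen witnesses in `C`, one for each realized trace on `D`. -/
def Wit (C : Set KCond) (D : Set Ordinal.{0}) : Set KCond :=
  ⋃ s ∈ trc D '' C, {q | ∃ h : ∃ p ∈ C, trc D p = s, q = h.choose}

lemma Wit_subset (C : Set KCond) (D : Set Ordinal.{0}) : Wit C D ⊆ C := by
  intro q hq
  simp only [Wit, Set.mem_iUnion, Set.mem_setOf_eq] at hq
  obtain ⟨s, hs, h, rfl⟩ := hq
  exact h.choose_spec.1

lemma Wit_trace (C : Set KCond) (D : Set Ordinal.{0}) {p : KCond} (hp : p ∈ C) :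
    ∃ q ∈ Wit C D, trc D q = trc D p := by
  have h : ∃ p' ∈ C, trc D p' = trc D p := ⟨p, hp, rfl⟩
  refine ⟨h.choose, ?_, h.choose_spec.2⟩
  simp only [Wit, Set.mem_iUnion, Set.mem_setOf_eq]
  exact ⟨trc D p, ⟨p, hp, rfl⟩, h, rfl⟩

lemma mk_Wit_le (hCH : (2 : Cardinal.{1}) ^ (ℵ₀ : Cardinal.{1}) = aleph 1)
    (C : Set KCond) {D : Set Ordinal.{0}} (hD : #D ≤ aleph 1) :
    #(Wit C D) ≤ (aleph 1 : Cardinal.{1}) := by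
  refine (Cardinal.mk_biUnion_le _ _).trans
    (mul_le_aleph1 (mk_trc_image_le hCH hD C) (ciSup_le' fun s => ?_))
  have hsub : ({q : KCond | ∃ h : ∃ p ∈ C, trc D p = s.val, q = h.choose}).Subsingleton := by
    rintro q ⟨h, rfl⟩ q' ⟨h', rfl⟩
    rfl
  exact hsub.cardinalMk_le_one.trans (one_le_aleph0.trans (aleph0_le_aleph 1))

/-- The transfinite "closure" recursion: at every stage we add witnesses for all traces
on the domain accumulated so far. -/
noncomputable def Bfun (C : Set KCond) (ξ : Ordinal.{0}) : Set KCond :=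
  (⋃ η : ↥(Set.Iio ξ), Bfun C η.val) ∪
    Wit C (KDom (⋃ η : ↥(Set.Iio ξ), Bfun C η.val))
termination_by ξ
decreasing_by all_goals exact η.2

lemma Bfun_eq (C : Set KCond) (ξ : Ordinal.{0}) :
    Bfun C ξ = (⋃ η : ↥(Set.Iio ξ), Bfun C η.val) ∪
      Wit C (KDom (⋃ η : ↥(Set.Iio ξ), Bfun C η.val)) := by
  rw [Bfun]

lemma Bfun_mono (C : Set KCond) {η ξ : Ordinal.{0}} (h : η ≤ ξ) :
    Bfun C η ⊆ Bfun C ξ := by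
  rcases eq_or_lt_of_le h with rfl | h
  · exact subset_rfl
  · rw [Bfun_eq C ξ]
    exact subset_trans
      (Set.subset_iUnion (fun η : ↥(Set.Iio ξ) => Bfun C η.val) ⟨η, h⟩)
      Set.subset_union_left

lemma Bfun_subset (C : Set KCond) (ξ : Ordinal.{0}) : Bfun C ξ ⊆ C := by
  induction ξ using Ordinal.induction with
  | _ ξ IH =>
    rw [Bfun_eq]
    apply Set.union_subset
    · exact Set.iUnion_subset fun η => IH η.val η.2
    · exact Wit_subset ..

lemma mk_Bfun_le (hCH : (2 : Cardinal.{1}) ^ (ℵ₀ : Cardinal.{1}) = aleph 1)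
    (C : Set KCond) (ξ : Ordinal.{0}) (hξ : ξ ≤ (aleph 1).ord) :
    #(Bfun C ξ) ≤ (aleph 1 : Cardinal.{1}) := by
  induction ξ using Ordinal.induction with
  | _ ξ IH =>
    rw [Bfun_eq]
    have hU : #(⋃ η : ↥(Set.Iio ξ), Bfun C η.val) ≤ (aleph 1 : Cardinal.{1}) := by
      refine (Cardinal.mk_iUnion_le _).trans (mul_le_aleph1 ?_
        (ciSup_le' fun η => IH η.val η.2 ((le_of_lt η.2).trans hξ)))
      rw [Ordinal.mk_Iio_ordinal]
      calc Cardinal.lift.{1} ξ.card ≤ Cardinal.lift.{1} ((aleph 1).ord).card :=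
            Cardinal.lift_le.mpr (Ordinal.card_le_card hξ)
        _ = aleph 1 := by rw [Cardinal.card_ord, Cardinal.lift_aleph, Ordinal.lift_one]
    refine (Cardinal.mk_union_le _ _).trans ?_
    calc #(⋃ η : ↥(Set.Iio ξ), Bfun C η.val)
          + #(Wit C (KDom (⋃ η : ↥(Set.Iio ξ), Bfun C η.val)))
        ≤ aleph 1 + aleph 1 := add_le_add hU (mk_Wit_le hCH C (mk_KDom_le hU))
      _ = aleph 1 := Cardinal.add_eq_self (aleph0_le_aleph 1)

/-- The key counting argument: a family of conditions that pairwise conflict on their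
`f`-parts has size at most `ℵ₁` (under CH). -/
lemma conflict_mk_le (hCH : (2 : Cardinal.{1}) ^ (ℵ₀ : Cardinal.{1}) = aleph 1)
    (C : Set KCond)
    (hconf : ∀ p ∈ C, ∀ q ∈ C, p ≠ q →
      ∃ δ, δ ∈ p.dom ∧ δ ∈ q.dom ∧ p.fmap δ ≠ q.fmap δ) :
    #C ≤ (aleph 1 : Cardinal.{1}) := by
  by_contra hlt
  set Ω : Ordinal.{0} := (aleph 1).ord with hΩ
  have hB : #(Bfun C Ω) ≤ aleph 1 := mk_Bfun_le hCH C Ω le_rfl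
  have hex : ¬ C ⊆ Bfun C Ω := fun h => hlt ((Cardinal.mk_le_mk_of_subset h).trans hB)
  obtain ⟨p, hpC, hpB⟩ := Set.not_subset.mp hex
  set U : Set KCond := ⋃ η : ↥(Set.Iio Ω), Bfun C η.val with hU
  set S : Set Ordinal.{0} := p.dom ∩ KDom U with hS
  -- find a single stage `ξ < Ω` absorbing `S`
  have hstage : ∃ ξ : Ordinal.{0}, ξ < Ω ∧ S ⊆ KDom (Bfun C ξ) := by
    have hstex : ∀ δ ∈ S, ∃ η : Ordinal.{0}, η < Ω ∧ δ ∈ KDom (Bfun C η) := by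
      rintro δ ⟨hδp, hδU⟩
      simp only [KDom, Set.mem_iUnion] at hδU
      obtain ⟨q, hqU, hδq⟩ := hδU
      rw [hU] at hqU
      simp only [Set.mem_iUnion] at hqU
      obtain ⟨η, hqη⟩ := hqU
      exact ⟨η.val, η.2, mem_KDom hqη hδq⟩
    rcases S.eq_empty_or_nonempty with hSe | hSne
    · refine ⟨0, ?_, by rw [hSe]; exact Set.empty_subset _⟩
      rw [hΩ, Cardinal.lt_ord, Ordinal.card_zero]
      exact (aleph0_lt_aleph_one).trans_le' (by simp)
    · have hScnt : S.Countable := (p.dom_countable).mono Set.inter_subset_left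
      obtain ⟨g, hg⟩ := hScnt.exists_eq_range hSne
      have hgS : ∀ n, g n ∈ S := by
        intro n
        rw [hg]
        exact Set.mem_range_self n
      choose st hstlt hstmem using fun n : ℕ => hstex (g n) (hgS n)
      refine ⟨iSup st, ?_, ?_⟩
      · refine Ordinal.iSup_lt_ord ?_ hstlt
        rw [Cardinal.mk_nat, Cardinal.isRegular_aleph_one.cof_eq]
        exact aleph0_lt_aleph_one
      · intro δ hδ
        rw [hg] at hδ
        obtain ⟨n, rfl⟩ := hδ
        exact KDom_mono (Bfun_mono C (Ordinal.le_iSup st n)) (hstmem n)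
  obtain ⟨ξ, hξΩ, hSsub⟩ := hstage
  -- witnesses at stage `ξ` land inside `Bfun C (ξ+1)`
  have hstep : (⋃ η : ↥(Set.Iio (ξ + 1)), Bfun C η.val) = Bfun C ξ := by
    apply Set.Subset.antisymm
    · refine Set.iUnion_subset fun η => Bfun_mono C ?_
      obtain ⟨η, hη⟩ := η
      simp only [Set.mem_Iio, Ordinal.add_one_eq_succ, Order.lt_succ_iff] at hη
      exact hη
    · exact Set.subset_iUnion (fun η : ↥(Set.Iio (ξ + 1)) => Bfun C η.val)
        ⟨ξ, by rw [Set.mem_Iio, Ordinal.add_one_eq_succ]; exact Order.lt_succ ξ⟩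
  have hWit : Wit C (KDom (Bfun C ξ)) ⊆ Bfun C (ξ + 1) := by
    rw [Bfun_eq C (ξ + 1), hstep]
    exact Set.subset_union_right
  obtain ⟨q, hqW, hqtr⟩ := Wit_trace C (KDom (Bfun C ξ)) hpC
  have hqC : q ∈ C := Wit_subset _ _ hqW
  have hqB : q ∈ Bfun C (ξ + 1) := hWit hqW
  have hξ1 : ξ + 1 < Ω := by
    rw [Ordinal.add_one_eq_succ]
    exact (Cardinal.isSuccLimit_ord (aleph0_le_aleph 1)).succ_lt hξΩ
  have hqU : q ∈ U := by
    rw [hU]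
    exact Set.mem_iUnion.mpr ⟨⟨ξ + 1, hξ1⟩, hqB⟩
  have hpq : p ≠ q := by
    rintro rfl
    exact hpB (Bfun_mono C hξ1.le hqB)
  obtain ⟨δ, hδp, hδq, hne⟩ := hconf p hpC q hqC hpq
  have hδS : δ ∈ S := ⟨hδp, mem_KDom hqU hδq⟩
  have hδD : δ ∈ KDom (Bfun C ξ) := hSsub hδS
  have hmem : (δ, p.fmap δ) ∈ trc (KDom (Bfun C ξ)) p := ⟨hδp, hδD, rfl⟩
  rw [← hqtr] at hmem
  exact hne hmem.2.2.symm


/-- Assuming CH, the poset for adding a Kurepa tree with `ℵ_{ω₁}` branches satisfies the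
`ℵ₂`-chain condition: every antichain has size at most `ℵ₁`. -/
theorem stmt19 (hCH : (2 : Cardinal.{1}) ^ (ℵ₀ : Cardinal.{1}) = aleph 1)
    (A : Set KCond)
    (hA : ∀ p ∈ A, ∀ q ∈ A, p ≠ q → ¬ ∃ r : KCond, r.le p ∧ r.le q) :
    #A ≤ aleph 1 := by

  classical
  refine mk_le_of_fiber_le (fun x : ↥A => (x.val).key) (mk_keySpace_le hCH) ?_
  intro k
  set C : Set KCond := {p | p ∈ A ∧ p.key = k} with hC
  have h1 : #{x : ↥A // x.val.key = k} ≤ #C := by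
    refine Cardinal.mk_le_of_injective
      (f := fun x : {x : ↥A // x.val.key = k} => (⟨x.val.val, x.val.2, x.2⟩ : ↥C)) ?_
    intro x y h
    simp only [Subtype.mk.injEq] at h
    exact Subtype.ext (Subtype.ext h)
  refine h1.trans (conflict_mk_le hCH C ?_)
  rintro p ⟨hpA, hpk⟩ q ⟨hqA, hqk⟩ hpq
  by_contra hno
  push_neg at hno
  obtain ⟨hβ, ht, hlt⟩ := KCond.key_inj (hpk.trans hqk.symm)
  exact hA p hpA q hqA hpq (KCond.compat p q hβ ht hlt hno)
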